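/- Let u ≥ 1 be a real number, d = 200·u² (an integer), and m a positive integer divisible by d with 200·u·v < m for some real v ≥ 0. Suppose a real number z satisfies both m/u - v ≤ z ≤ u·(m/d) + v (i.e., z is a (u,v)-approximation of m and of m/d simultaneously). Then a contradiction follows; formally: there is no real z with m/u - v ≤ u·(m/d) + v under these hypotheses. -/

import Mathlib

theorem stmt_17 (u : ℝ) (hu : 1 ≤ u) (d : ℕ) (hd : (d : ℝ) = 200 * u ^ 2)
    (m : ℕ) (hm : 0 < m) (hdvd : d ∣ m) (v : ℝ) (hv : 0 ≤ v)
    (hmv : 200 * u * v < m) :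
    ¬ ∃ z : ℝ, (m : ℝ) / u - v ≤ z ∧ z ≤ u * ((m : ℝ) / d) + v := by
  rintro ⟨z, h1, h2⟩
  have hu0 : (0:ℝ) < u := lt_of_lt_of_le one_pos hu
  have hm0 : (0:ℝ) < m := Nat.cast_pos.mpr hm
  have key : (m : ℝ) / u - v ≤ u * ((m : ℝ) / d) + v := le_trans h1 h2
  rw [hd] at key
  have h3 : u * ((m:ℝ) / (200 * u ^ 2)) = m / (200 * u) := by
    field_simp
  rw [h3] at key
  -- key : m/u - v ≤ m/(200u) + v
  have hv2 : 2 * v < m / (100 * u) := by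
    rw [lt_div_iff₀ (by positivity)]
    nlinarith
  have : (m:ℝ)/u - m/(200*u) = 199 * m / (200 * u) := by
    field_simp; ring
  have h4 : 199 * (m:ℝ) / (200 * u) < (m:ℝ) / (100 * u) :=
    lt_of_le_of_lt (by linarith) hv2
  rw [div_lt_div_iff₀ (by positivity) (by positivity)] at h4
  nlinarith
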